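/- Let ψ₅ : P → Q be the unique ℂ-algebra homomorphism with ψ₅(ℓ⁽ⁱ⁾) = D_Q^i((t⁽⁰⁾)²) and ψ₅(w⁽ⁱ⁾) = D_Q^i((t⁽⁰⁾)⁵) for all i ≥ 0, and let I₅ ⊆ P be the ideal generated by {Dⁱ((w⁽⁰⁾)² − (ℓ⁽⁰⁾)⁵) : i ≥ 0}. Then the kernel of ψ₅ equals the radical of I₅; equivalently, for p ∈ P one has ψ₅(p) = 0 if and only if pⁿ ∈ I₅ for some n ≥ 1. -/

import Mathlib

open MvPolynomial

noncomputable section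

/-- The polynomial ring `P = ℂ[ℓ⁽⁰⁾, ℓ⁽¹⁾, …, w⁽⁰⁾, w⁽¹⁾, …]`:
variables are indexed by `Fin 2 × ℕ`, where `(0, i)` is `ℓ⁽ⁱ⁾` and `(1, i)` is `w⁽ⁱ⁾`. -/
abbrev P : Type := MvPolynomial (Fin 2 × ℕ) ℂ

/-- The unique ℂ-linear derivation `D : P → P` with `D(ℓ⁽ⁱ⁾) = ℓ⁽ⁱ⁺¹⁾`, `D(w⁽ⁱ⁾) = w⁽ⁱ⁺¹⁾`. -/
def D : Derivation ℂ P P :=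
  MvPolynomial.mkDerivation ℂ (fun p : Fin 2 × ℕ => (X (p.1, p.2 + 1) : P))

/-- `ℓ⁽ⁱ⁾` -/
def lv (i : ℕ) : P := X (0, i)

/-- `w⁽ⁱ⁾` -/
def wv (i : ℕ) : P := X (1, i)

/-- The polynomial ring `Q = ℂ[t⁽⁰⁾, t⁽¹⁾, …]`. -/
abbrev Q : Type := MvPolynomial ℕ ℂ

/-- The unique ℂ-linear derivation `D_Q : Q → Q` with `D_Q(t⁽ⁱ⁾) = t⁽ⁱ⁺¹⁾`. -/
def DQ : Derivation ℂ Q Q :=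
  MvPolynomial.mkDerivation ℂ (fun i : ℕ => (X (i + 1) : Q))

/-- `t⁽⁰⁾` -/
def t : Q := X 0

/-- The ideal `I₅` generated by all `Dⁱ((w⁽⁰⁾)² − (ℓ⁽⁰⁾)⁵)`, `i ≥ 0`. -/
def I₅ : Ideal P := Ideal.span (Set.range fun i : ℕ => (⇑D)^[i] (wv 0 ^ 2 - lv 0 ^ 5))

/-- The ℂ-algebra homomorphism `ψ₅ : P → Q` with `ψ₅(ℓ⁽ⁱ⁾) = D_Q^i((t⁽⁰⁾)²)` and
`ψ₅(w⁽ⁱ⁾) = D_Q^i((t⁽⁰⁾)⁵)`, induced by the parametrization `t ↦ (t², t⁵)`. -/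
def ψ₅ : P →ₐ[ℂ] Q :=
  aeval (fun p : Fin 2 × ℕ => (⇑DQ)^[p.2] (if p.1 = 0 then t ^ 2 else t ^ 5))

/-! ### Auxiliary lemmas -/

/-- If a derivation maps a generating set into the span, it preserves the span. -/
lemma deriv_span_stable {A : Type*} [CommRing A] [Algebra ℂ A]
    (d : Derivation ℂ A A) (S : Set A) (h : ∀ s ∈ S, d s ∈ Ideal.span S) :
    ∀ a ∈ Ideal.span S, d a ∈ Ideal.span S := by
  intro a ha
  induction ha using Submodule.span_induction with
  | mem x hx => exact h x hx
  | zero => simp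
  | add x y _ _ hx hy => rw [map_add]; exact Ideal.add_mem _ hx hy
  | smul r x hx hdx =>
      rw [smul_eq_mul, Derivation.leibniz, smul_eq_mul, smul_eq_mul]
      exact Ideal.add_mem _ (Ideal.mul_mem_left _ _ hdx)
        (Ideal.mul_mem_right _ _ hx)

lemma I₅_stable : ∀ a ∈ I₅, D a ∈ I₅ := by
  apply deriv_span_stable
  rintro s ⟨i, rfl⟩
  refine Ideal.subset_span ⟨i + 1, ?_⟩
  simp [Function.iterate_succ_apply']

/-- Char 0: dividing by positive naturals inside an ideal. -/
lemma nsmul_mem_ideal {I : Ideal P} {x : P} {m : ℕ} (hm : 1 ≤ m) (h : ((m : ℕ) : P) * x ∈ I) :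
    x ∈ I := by
  have hm0 : (m : ℂ) ≠ 0 := Nat.cast_ne_zero.mpr (by omega)
  have : x = C ((m : ℂ)⁻¹) * (((m : ℕ) : P) * x) := by
    rw [← mul_assoc, show ((m : ℕ) : P) = C ((m : ℂ)) from (map_natCast (C : ℂ →+* P) m).symm,
      ← C_mul, inv_mul_cancel₀ hm0, C_1, one_mul]
  rw [this]
  exact Ideal.mul_mem_left _ _ h

lemma pow_step {a : P} {n k : ℕ} (h : a ^ (n + 1) * (D a) ^ k ∈ I₅) :
    a ^ n * (D a) ^ (k + 2) ∈ I₅ := by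
  have h1 : D (a ^ (n + 1) * (D a) ^ k) ∈ I₅ := I₅_stable _ h
  have h2 : D a * D (a ^ (n + 1) * (D a) ^ k) ∈ I₅ := Ideal.mul_mem_left _ _ h1
  have h3 : ((k : ℕ) : P) * (D (D a) * (a ^ (n + 1) * (D a) ^ k)) ∈ I₅ :=
    Ideal.mul_mem_left _ _ (Ideal.mul_mem_left _ _ h)
  have hD : D a * D (a ^ (n + 1) * (D a) ^ k)
      = ((k : ℕ) : P) * (D (D a) * (a ^ (n + 1) * (D a) ^ k))
        + (((n + 1 : ℕ)) : P) * (a ^ n * (D a) ^ (k + 2)) := by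
    rw [Derivation.leibniz, Derivation.leibniz_pow, Derivation.leibniz_pow]
    cases k with
    | zero => simp only [smul_eq_mul, nsmul_eq_mul, Nat.add_sub_cancel]; push_cast; ring
    | succ j =>
        simp only [smul_eq_mul, nsmul_eq_mul, Nat.add_sub_cancel, Nat.succ_sub_one]
        push_cast; ring
  rw [hD] at h2
  have h4 : (((n + 1 : ℕ)) : P) * (a ^ n * (D a) ^ (k + 2)) ∈ I₅ := by
    have := Ideal.sub_mem _ h2 h3
    simpa using this
  exact nsmul_mem_ideal (by omega) h4

lemma radical_stable : ∀ a ∈ I₅.radical, D a ∈ I₅.radical := by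
  have key : ∀ (m : ℕ) (b : P) (k : ℕ), b ^ m * (D b) ^ k ∈ I₅ → (D b) ^ (k + 2 * m) ∈ I₅ := by
    intro m
    induction m with
    | zero => intro b k h; simpa using h
    | succ j ih =>
        intro b k h
        have h1 : b ^ j * (D b) ^ (k + 2) ∈ I₅ := pow_step h
        have h2 := ih b (k + 2) h1
        have : k + 2 + 2 * j = k + 2 * (j + 1) := by omega
        rwa [this] at h2
  intro a ha
  obtain ⟨n, hn⟩ := ha
  rcases Nat.eq_zero_or_pos n with h0 | hpos
  · subst h0
    simp only [pow_zero] at hn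
    exact ⟨1, by simpa using Ideal.mul_mem_left _ (D a) hn⟩
  · have := key n a 0 (by simpa using hn)
    exact ⟨2 * n, by simpa using this⟩


lemma D_X (v : Fin 2 × ℕ) : D (X v) = X (v.1, v.2 + 1) :=
  MvPolynomial.mkDerivation_X _ _ v

lemma f_mem_I₅ : wv 0 ^ 2 - lv 0 ^ 5 ∈ I₅ :=
  Ideal.subset_span ⟨0, rfl⟩

/-- In a radical differential ideal, `a * b ∈ J` implies `D a * b ∈ J`. -/
lemma rad_mul {a b : P} (h : a * b ∈ I₅.radical) : D a * b ∈ I₅.radical := by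
  have h1 : D (a * b) ∈ I₅.radical := radical_stable _ h
  have h2 : (D a * b) * D (a * b) ∈ I₅.radical := Ideal.mul_mem_left _ _ h1
  have h3 : (a * b) * (D a * D b) ∈ I₅.radical := Ideal.mul_mem_right _ _ h
  have hsq : (D a * b) ^ 2 ∈ I₅.radical := by
    have heq : (D a * b) ^ 2 = (D a * b) * D (a * b) - (a * b) * (D a * D b) := by
      rw [Derivation.leibniz, smul_eq_mul, smul_eq_mul]; ring
    rw [heq]
    exact Ideal.sub_mem _ h2 h3
  exact Ideal.mem_radical_of_pow_mem hsq

lemma constCoeff_DQ (q : Q) : constantCoeff (DQ q) = 0 := by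
  induction q using MvPolynomial.induction_on with
  | C a => rw [show (C a : Q) = algebraMap ℂ Q a from rfl, Derivation.map_algebraMap, map_zero]
  | add p q hp hq => rw [map_add, map_add, hp, hq, add_zero]
  | mul_X p i hp =>
      simp [Derivation.leibniz, smul_eq_mul, hp,
        show DQ (X i) = X (i + 1) from MvPolynomial.mkDerivation_X _ _ i]

lemma constCoeff_ψ₅ (p : P) (hp : ψ₅ p = 0) : constantCoeff p = 0 := by
  have key : (constantCoeff (R := ℂ) (σ := ℕ)).comp (ψ₅ : P →+* Q)
      = constantCoeff (R := ℂ) (σ := Fin 2 × ℕ) := by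
    apply MvPolynomial.ringHom_ext
    · intro a
      simp [ψ₅]
    · intro v
      have : ψ₅ (X v) = (⇑DQ)^[v.2] (if v.1 = 0 then t ^ 2 else t ^ 5) := by
        simp [ψ₅]
      rw [RingHom.comp_apply, constantCoeff_X]
      show constantCoeff (ψ₅ (X v)) = 0
      rw [this]
      cases hv : v.2 with
      | zero =>
          simp only [Function.iterate_zero, id_eq]
          rcases eq_or_ne v.1 0 with h | h <;> simp [h, t]
      | succ i =>
          rw [Function.iterate_succ_apply']
          exact constCoeff_DQ _
  calc constantCoeff p = constantCoeff (ψ₅ p) := (congrFun (congrArg _ key) p).symm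
    _ = 0 := by rw [hp, map_zero]

lemma mem_span_X_of_constCoeff (p : P) (hp : constantCoeff p = 0) :
    p ∈ Ideal.span (Set.range (X : Fin 2 × ℕ → P)) := by
  have key : ∀ q : P, q - C (constantCoeff q) ∈ Ideal.span (Set.range (X : Fin 2 × ℕ → P)) := by
    intro q
    induction q using MvPolynomial.induction_on with
    | C a => simp
    | add p q hp hq =>
        have : p + q - C (constantCoeff (p + q))
            = (p - C (constantCoeff p)) + (q - C (constantCoeff q)) := by
          rw [map_add, map_add]; ring
        rw [this]; exact Ideal.add_mem _ hp hq
    | mul_X p i hp =>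
        rw [map_mul, constantCoeff_X, mul_zero, map_zero, sub_zero]
        exact Ideal.mul_mem_left _ _ (Ideal.subset_span ⟨i, rfl⟩)
  have := key p
  rwa [hp, map_zero, sub_zero] at this

lemma cascade (p : P) (hp : p ∈ Ideal.span (Set.range (X : Fin 2 × ℕ → P)))
    (hl : lv 0 * p ∈ I₅.radical) : p ∈ I₅.radical := by
  have hli : ∀ i, lv i * p ∈ I₅.radical := by
    intro i
    induction i with
    | zero => exact hl
    | succ j ih =>
        have := rad_mul (a := lv j) (b := p) ih
        rwa [show D (lv j) = lv (j + 1) from D_X (0, j)] at this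
  have hw0 : wv 0 * p ∈ I₅.radical := by
    have hsq : (wv 0 * p) ^ 2 ∈ I₅.radical := by
      have heq : (wv 0 * p) ^ 2
          = (wv 0 ^ 2 - lv 0 ^ 5) * p ^ 2 + (lv 0 ^ 4 * p) * (lv 0 * p) := by ring
      rw [heq]
      exact Ideal.add_mem _ (Ideal.mul_mem_right _ _ (Ideal.le_radical f_mem_I₅))
        (Ideal.mul_mem_left _ _ (hli 0))
    exact Ideal.mem_radical_of_pow_mem hsq
  have hwi : ∀ i, wv i * p ∈ I₅.radical := by
    intro i
    induction i with
    | zero => exact hw0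
    | succ j ih =>
        have := rad_mul (a := wv j) (b := p) ih
        rwa [show D (wv j) = wv (j + 1) from D_X (1, j)] at this
  have hX : ∀ v : Fin 2 × ℕ, X v * p ∈ I₅.radical := by
    rintro ⟨j, i⟩
    fin_cases j
    · exact hli i
    · exact hwi i
  have hmul : ∀ x ∈ Ideal.span (Set.range (X : Fin 2 × ℕ → P)), x * p ∈ I₅.radical := by
    intro x hx
    induction hx using Submodule.span_induction with
    | mem x hx => obtain ⟨v, rfl⟩ := hx; exact hX v
    | zero => simp
    | add x y _ _ hx hy => rw [add_mul]; exact Ideal.add_mem _ hx hy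
    | smul r x _ hx =>
        rw [smul_eq_mul, mul_assoc]
        exact Ideal.mul_mem_left _ _ hx
  exact Ideal.mem_radical_of_pow_mem (m := 2) (by rw [pow_two]; exact hmul p hp)

/-! ### The auxiliary ring `P' = P[y]` with `y = 1/ℓ⁽⁰⁾` modulo the relation ideal -/

abbrev P' : Type := MvPolynomial (Option (Fin 2 × ℕ)) ℂ

def yy : P' := X none

def D' : Derivation ℂ P' P' :=
  MvPolynomial.mkDerivation ℂ (fun v : Option (Fin 2 × ℕ) => match v with
    | none => -(X none ^ 2 * X (some (0, 1)))
    | some p => X (some (p.1, p.2 + 1)))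

def ι : P →ₐ[ℂ] P' := aeval (fun v => X (some v))

lemma ι_X (v : Fin 2 × ℕ) : ι (X v) = X (some v) := aeval_X _ v

lemma D'_y : D' yy = -(yy ^ 2 * ι (lv 1)) := by
  rw [show ι (lv 1) = X (some (0, 1)) from ι_X _]
  exact MvPolynomial.mkDerivation_X _ _ none

lemma D'_X_some (v : Fin 2 × ℕ) : D' (X (some v)) = X (some (v.1, v.2 + 1)) :=
  MvPolynomial.mkDerivation_X _ _ (some v)

lemma ι_D (p : P) : ι (D p) = D' (ι p) := by
  induction p using MvPolynomial.induction_on with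
  | C a =>
      rw [show (C a : P) = algebraMap ℂ P a from rfl, Derivation.map_algebraMap, map_zero,
        AlgHom.commutes, Derivation.map_algebraMap]
  | add p q hp hq => simp only [Derivation.map_add, map_add, hp, hq]
  | mul_X p v hp =>
      rw [Derivation.leibniz]
      simp only [smul_eq_mul, map_add, map_mul, ι_X, D_X, D'_X_some, hp, Derivation.leibniz]

def K : Ideal P' :=
  Ideal.span ((⇑ι '' (I₅.radical : Set P)) ∪ {yy * ι (lv 0) - 1})

lemma gen1_mem_K {j : P} (hj : j ∈ I₅.radical) : ι j ∈ K :=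
  Ideal.subset_span (Set.mem_union_left _ ⟨j, hj, rfl⟩)

lemma gen2_mem_K : yy * ι (lv 0) - 1 ∈ K :=
  Ideal.subset_span (Set.mem_union_right _ rfl)

lemma K_stable : ∀ a ∈ K, D' a ∈ K := by
  apply deriv_span_stable
  rintro s (⟨j, hj, rfl⟩ | rfl)
  · rw [← ι_D]
    exact gen1_mem_K (radical_stable _ hj)
  · have hDl0 : D' (ι (lv 0)) = ι (lv 1) := by
      rw [← ι_D, show D (lv 0) = lv 1 from D_X (0, 0)]
    have : D' (yy * ι (lv 0) - 1) = (-(yy * ι (lv 1))) * (yy * ι (lv 0) - 1) := by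
      rw [map_sub, Derivation.leibniz, Derivation.map_one_eq_zero, smul_eq_mul, smul_eq_mul,
        D'_y, hDl0]
      ring
    rw [this]
    exact Ideal.mul_mem_left _ _ gen2_mem_K

lemma mkK_D'_congr {a b : P'} (h : Ideal.Quotient.mk K a = Ideal.Quotient.mk K b) :
    Ideal.Quotient.mk K (D' a) = Ideal.Quotient.mk K (D' b) := by
  rw [Ideal.Quotient.eq] at h ⊢
  have := K_stable _ h
  rwa [map_sub] at this

/-! ### The map `φ : Q → P'/K` -/

def cq : ℕ → P' := fun i => (⇑D')^[i] (ι (wv 0) * yy ^ 2)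

lemma cq_succ (i : ℕ) : cq (i + 1) = D' (cq i) := Function.iterate_succ_apply' _ _ _

def φ : Q →ₐ[ℂ] (P' ⧸ K) := aeval (fun i => Ideal.Quotient.mk K (cq i))

lemma φ_X (i : ℕ) : φ (X i) = Ideal.Quotient.mk K (cq i) := aeval_X _ i

lemma DQ_X (i : ℕ) : DQ (X i) = X (i + 1) := MvPolynomial.mkDerivation_X _ _ i

lemma φ_claim (q : Q) : ∃ a : P',
    φ q = Ideal.Quotient.mk K a ∧ φ (DQ q) = Ideal.Quotient.mk K (D' a) := by
  induction q using MvPolynomial.induction_on with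
  | C a =>
      refine ⟨algebraMap ℂ P' a, ?_, ?_⟩
      · rw [show (C a : Q) = algebraMap ℂ Q a from rfl, AlgHom.commutes,
          show Ideal.Quotient.mk K (algebraMap ℂ P' a)
            = Ideal.Quotient.mkₐ ℂ K (algebraMap ℂ P' a) from rfl, AlgHom.commutes]
      · rw [show (C a : Q) = algebraMap ℂ Q a from rfl, Derivation.map_algebraMap,
          Derivation.map_algebraMap, map_zero, map_zero]
  | add p q hp hq =>
      obtain ⟨a, ha1, ha2⟩ := hp
      obtain ⟨b, hb1, hb2⟩ := hq
      exact ⟨a + b, by rw [map_add, ha1, hb1, map_add],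
        by rw [map_add, map_add, ha2, hb2, map_add, map_add]⟩
  | mul_X p i hp =>
      obtain ⟨a, ha1, ha2⟩ := hp
      refine ⟨a * cq i, ?_, ?_⟩
      · rw [map_mul, ha1, φ_X, map_mul]
      · rw [Derivation.leibniz, smul_eq_mul, smul_eq_mul, map_add, map_mul, map_mul,
          DQ_X, φ_X, φ_X, ha1, ha2, Derivation.leibniz, smul_eq_mul, smul_eq_mul,
          map_add, map_mul, map_mul, cq_succ]

lemma ψ₅_X (v : Fin 2 × ℕ) :
    ψ₅ (X v) = (⇑DQ)^[v.2] (if v.1 = 0 then t ^ 2 else t ^ 5) := aeval_X _ v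

lemma φ_ψ₅_X (j : Fin 2) (i : ℕ) :
    φ (ψ₅ (X (j, i))) = Ideal.Quotient.mk K (ι (X (j, i))) := by
  induction i with
  | zero =>
      rw [ψ₅_X]
      simp only [Function.iterate_zero, id_eq]
      have hc0 : φ t = Ideal.Quotient.mk K (ι (wv 0) * yy ^ 2) := φ_X 0
      have hw : ι (wv 0 ^ 2 - lv 0 ^ 5) = ι (wv 0) ^ 2 - ι (lv 0) ^ 5 := by
        rw [map_sub, map_pow, map_pow]
      by_cases hj : j = 0
      · subst hj
        rw [if_pos rfl, map_pow, hc0, ← map_pow]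
        rw [Ideal.Quotient.eq]
        have heq : (ι (wv 0) * yy ^ 2) ^ 2 - ι (X ((0 : Fin 2), 0))
            = yy ^ 4 * ι (wv 0 ^ 2 - lv 0 ^ 5)
              + (ι (lv 0) * ((yy * ι (lv 0)) ^ 3 + (yy * ι (lv 0)) ^ 2 + yy * ι (lv 0) + 1))
                * (yy * ι (lv 0) - 1) := by
          rw [hw]
          rw [show (X ((0 : Fin 2), 0) : P) = lv 0 from rfl]
          ring
        rw [heq]
        exact Ideal.add_mem _ (Ideal.mul_mem_left _ _ (gen1_mem_K (Ideal.le_radical f_mem_I₅)))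
          (Ideal.mul_mem_left _ _ gen2_mem_K)
      · have hj1 : j = 1 := by omega
        subst hj1
        rw [if_neg (by decide), map_pow, hc0, ← map_pow]
        rw [Ideal.Quotient.eq]
        have heq : (ι (wv 0) * yy ^ 2) ^ 5 - ι (X ((1 : Fin 2), 0))
            = (yy ^ 10 * ι (wv 0) * (ι (wv 0) ^ 2 + ι (lv 0) ^ 5)) * ι (wv 0 ^ 2 - lv 0 ^ 5)
              + (ι (wv 0) * (((yy * ι (lv 0)) ^ 9 + (yy * ι (lv 0)) ^ 8 + (yy * ι (lv 0)) ^ 7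
                + (yy * ι (lv 0)) ^ 6 + (yy * ι (lv 0)) ^ 5 + (yy * ι (lv 0)) ^ 4
                + (yy * ι (lv 0)) ^ 3 + (yy * ι (lv 0)) ^ 2 + yy * ι (lv 0) + 1)))
                * (yy * ι (lv 0) - 1) := by
          rw [hw, show (X ((1 : Fin 2), 0) : P) = wv 0 from rfl]
          ring
        rw [heq]
        exact Ideal.add_mem _ (Ideal.mul_mem_left _ _ (gen1_mem_K (Ideal.le_radical f_mem_I₅)))
          (Ideal.mul_mem_left _ _ gen2_mem_K)
  | succ i ih =>
      have hx : ψ₅ (X ((j, i + 1) : Fin 2 × ℕ)) = DQ (ψ₅ (X ((j, i) : Fin 2 × ℕ))) := by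
        rw [ψ₅_X, ψ₅_X]
        exact Function.iterate_succ_apply' _ _ _
      obtain ⟨a, ha1, ha2⟩ := φ_claim (ψ₅ (X ((j, i) : Fin 2 × ℕ)))
      rw [hx, ha2, mkK_D'_congr (ha1.symm.trans ih), ← ι_D,
        show D (X ((j, i) : Fin 2 × ℕ)) = X (j, i + 1) from D_X (j, i)]

lemma φ_ψ₅ (p : P) : φ (ψ₅ p) = Ideal.Quotient.mk K (ι p) := by
  have : φ.comp ψ₅ = (Ideal.Quotient.mkₐ ℂ K).comp ι := by
    apply MvPolynomial.algHom_ext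
    rintro ⟨j, i⟩
    simpa using φ_ψ₅_X j i
  calc φ (ψ₅ p) = (φ.comp ψ₅) p := rfl
    _ = ((Ideal.Quotient.mkₐ ℂ K).comp ι) p := by rw [this]
    _ = Ideal.Quotient.mk K (ι p) := rfl

/-! ### Contraction via localization -/

abbrev Ploc : Type := Localization.Away (lv 0 : P)

instance : IsLocalization (Submonoid.powers (lv 0 : P)) Ploc :=
  Localization.isLocalization

instance : IsLocalization (Submonoid.powers (X ((0 : Fin 2), 0) : P)) Ploc :=
  Localization.isLocalization

def eLoc : P' →+* Ploc :=
  eval₂Hom ((algebraMap P Ploc).comp (C : ℂ →+* P))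
    (fun v : Option (Fin 2 × ℕ) => match v with
      | none => IsLocalization.Away.invSelf (lv 0)
      | some v => algebraMap P Ploc (X v))

lemma eLoc_ι (p : P) : eLoc (ι p) = algebraMap P Ploc p := by
  induction p using MvPolynomial.induction_on with
  | C a =>
      have h1 : ι (C a) = C a := by
        rw [show ι (C a) = algebraMap ℂ P' a from aeval_C _ a, algebraMap_eq]
      rw [h1]
      simp [eLoc]
  | add p q hp hq => rw [map_add ι, eLoc.map_add, hp, hq, (algebraMap P Ploc).map_add]
  | mul_X p v hp =>
      rw [map_mul ι, ι_X, eLoc.map_mul, (algebraMap P Ploc).map_mul, hp]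
      congr 1
      simp [eLoc]

lemma eLoc_K {a : P'} (ha : a ∈ K) :
    eLoc a ∈ (I₅.radical).map (algebraMap P Ploc) := by
  induction ha using Submodule.span_induction with
  | mem x hx =>
      rcases hx with ⟨j, hj, rfl⟩ | rfl
      · rw [eLoc_ι]
        exact Ideal.mem_map_of_mem _ hj
      · have : eLoc (yy * ι (lv 0) - 1) = 0 := by
          rw [eLoc.map_sub, eLoc.map_mul, eLoc_ι, eLoc.map_one, show eLoc yy
            = IsLocalization.Away.invSelf (lv 0) from by simp [eLoc, yy],
            mul_comm, IsLocalization.Away.mul_invSelf, sub_self]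
        rw [this]
        exact Ideal.zero_mem _
  | zero => rw [eLoc.map_zero]; exact Ideal.zero_mem _
  | add x y _ _ hx hy => rw [eLoc.map_add]; exact Ideal.add_mem _ hx hy
  | smul r x _ hx => rw [smul_eq_mul, eLoc.map_mul]; exact Ideal.mul_mem_left _ _ hx

lemma contraction {p : P} (hp : ι p ∈ K) : ∃ n : ℕ, lv 0 ^ n * p ∈ I₅.radical := by
  have h1 : algebraMap P Ploc p ∈ (I₅.radical).map (algebraMap P Ploc) := by
    rw [← eLoc_ι]
    exact eLoc_K hp
  rw [IsLocalization.mem_map_algebraMap_iff (Submonoid.powers (lv 0 : P)) Ploc] at h1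
  obtain ⟨⟨j, s⟩, hjs⟩ := h1
  obtain ⟨n, hn⟩ := s.2
  have hn' : (lv 0 ^ n : P) = (s : P) := hn
  refine ⟨n, ?_⟩
  have hinj : Function.Injective (algebraMap P Ploc) :=
    IsLocalization.injective Ploc
      (powers_le_nonZeroDivisors_of_noZeroDivisors (MvPolynomial.X_ne_zero (σ := Fin 2 × ℕ) (0, 0)))
  have heq : algebraMap P Ploc (lv 0 ^ n * p) = algebraMap P Ploc (j : P) := by
    rw [(algebraMap P Ploc).map_mul, hn', mul_comm]
    exact hjs
  have h2 : lv 0 ^ n * p = (j : P) := hinj heq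
  rw [h2]
  exact j.2

/-! ### `I₅ ⊆ ker ψ₅` -/

lemma ψ₅_D (p : P) : ψ₅ (D p) = DQ (ψ₅ p) := by
  induction p using MvPolynomial.induction_on with
  | C a =>
      rw [show (C a : P) = algebraMap ℂ P a from rfl, Derivation.map_algebraMap, map_zero,
        AlgHom.commutes, Derivation.map_algebraMap]
  | add p q hp hq => simp only [map_add, hp, hq]
  | mul_X p v hp =>
      have hDX : ψ₅ (D (X v)) = DQ (ψ₅ (X v)) := by
        rw [show D (X v) = X (v.1, v.2 + 1) from D_X v, ψ₅_X, ψ₅_X]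
        exact Function.iterate_succ_apply' _ _ _
      rw [Derivation.leibniz]
      simp only [smul_eq_mul, map_add, map_mul, hp, hDX, Derivation.leibniz]

lemma ψ₅_gen (i : ℕ) : ψ₅ ((⇑D)^[i] (wv 0 ^ 2 - lv 0 ^ 5)) = 0 := by
  induction i with
  | zero =>
      simp only [Function.iterate_zero, id_eq, map_sub, map_pow]
      rw [show ψ₅ (wv 0) = t ^ 5 from by rw [wv, ψ₅_X]; simp,
        show ψ₅ (lv 0) = t ^ 2 from by rw [lv, ψ₅_X]; simp,
        ← pow_mul, ← pow_mul]
      norm_num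
  | succ i ih =>
      rw [Function.iterate_succ_apply', ψ₅_D, ih, map_zero]

lemma I₅_le_ker : I₅ ≤ RingHom.ker ψ₅ := by
  rw [I₅, Ideal.span_le]
  rintro s ⟨i, rfl⟩
  exact ψ₅_gen i

theorem ker_ψ₅_eq_radical :
    RingHom.ker ψ₅ = I₅.radical ∧ ∀ p : P, ψ₅ p = 0 ↔ ∃ n : ℕ, 1 ≤ n ∧ p ^ n ∈ I₅ := by
  have hker : RingHom.ker ψ₅ = I₅.radical := by
    apply le_antisymm
    · intro p hp
      rw [RingHom.mem_ker] at hp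
      have hK : ι p ∈ K := by
        have h1 : φ (ψ₅ p) = Ideal.Quotient.mk K (ι p) := φ_ψ₅ p
        rw [hp, map_zero] at h1
        exact (Ideal.Quotient.eq_zero_iff_mem).mp h1.symm
      obtain ⟨n, hn⟩ := contraction hK
      have hl : lv 0 * p ∈ I₅.radical := by
        have hpow : (lv 0 * p) ^ (n + 1) ∈ I₅.radical := by
          have heq : (lv 0 * p) ^ (n + 1) = (lv 0 ^ n * p) * (lv 0 * p ^ n) := by ring
          rw [heq]
          exact Ideal.mul_mem_right _ _ hn
        exact Ideal.mem_radical_of_pow_mem hpow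
      exact cascade p (mem_span_X_of_constCoeff p (constCoeff_ψ₅ p hp)) hl
    · have hprime : (RingHom.ker ψ₅).IsPrime := RingHom.ker_isPrime _
      rw [hprime.radical_le_iff]
      exact I₅_le_ker
  refine ⟨hker, fun p => ?_⟩
  constructor
  · intro hp
    have hmem : p ∈ I₅.radical := by
      rw [← hker]
      exact RingHom.mem_ker.mpr hp
    obtain ⟨n, hn⟩ := hmem
    match n, hn with
    | 0, hn =>
        refine ⟨1, le_refl 1, ?_⟩
        rw [pow_one]
        have htop : I₅ = ⊤ := (Ideal.eq_top_iff_one _).mpr (by simpa using hn)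
        rw [htop]
        trivial
    | (n + 1), hn => exact ⟨n + 1, by omega, hn⟩
  · rintro ⟨n, hn1, hn⟩
    have hmem : p ∈ I₅.radical := ⟨n, hn⟩
    rw [← hker] at hmem
    exact RingHom.mem_ker.mp hmem
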